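/- arXiv:1401.5783 — 3 statements merged into one kernel-verified Lean document; each statement's English description precedes it below -/
import Mathlib

section
/- For all real numbers α, β, δ > 0 with α − βδ = −1, for every ξ ∈ ℝ^d, ∫₀¹ t^α / (t^δ + ⟨ξ⟩^{−2})^β dt ≤ 1/(α+1) + log(⟨ξ⟩^{2β/(α+1)}). -/
open MeasureTheory

/-- Lemma 4.1 (case α − βδ = −1): logarithmic bound for the integral
∫₀¹ t^α / (t^δ + ⟨ξ⟩^{−2})^β dt, where ⟨ξ⟩ = √(1+|ξ|²). -/
theorem stmt_1 (d : ℕ) (α β δ : ℝ) (hα : 0 < α) (hβ : 0 < β) (hδ : 0 < δ)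
    (h : α - β * δ = -1) :
    ∀ ξ : EuclideanSpace ℝ (Fin d),
      ∫ t in (0:ℝ)..1, t ^ α / (t ^ δ + (Real.sqrt (1 + ‖ξ‖ ^ 2)) ^ (-2 : ℝ)) ^ β
        ≤ 1 / (α + 1) + Real.log ((Real.sqrt (1 + ‖ξ‖ ^ 2)) ^ (2 * β / (α + 1))) := by
  intro ξ
  set s := Real.sqrt (1 + ‖ξ‖ ^ 2) with hs_def
  have hs1 : 1 ≤ s := by
    nlinarith [Real.sq_sqrt (show (0:ℝ) ≤ 1 + ‖ξ‖ ^ 2 by positivity),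
      Real.sqrt_nonneg (1 + ‖ξ‖ ^ 2), sq_nonneg ‖ξ‖, hs_def]
  have hs0 : 0 < s := lt_of_lt_of_le one_pos hs1
  set A := s ^ (-2:ℝ) with hA_def
  have hA0 : 0 < A := Real.rpow_pos_of_pos hs0 _
  have hA1 : A ≤ 1 := Real.rpow_le_one_of_one_le_of_nonpos hs1 (by norm_num)
  set c := A ^ (δ⁻¹ : ℝ) with hc_def
  have hc0 : 0 < c := Real.rpow_pos_of_pos hA0 _
  have hc1 : c ≤ 1 := Real.rpow_le_one hA0.le hA1 (by positivity)
  have hβδ : β * δ = α + 1 := by linarith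
  have hα1 : (0:ℝ) < α + 1 := by linarith
  -- continuity of the integrand on [0,1]
  have hcont : ContinuousOn (fun t : ℝ => t ^ α / (t ^ δ + A) ^ β) (Set.Icc 0 1) := by
    apply ContinuousOn.div
    · exact continuousOn_id.rpow_const fun x _ => Or.inr hα.le
    · exact ((continuousOn_id.rpow_const fun x _ => Or.inr hδ.le).add
        continuousOn_const).rpow_const fun x hx => Or.inl
          (add_pos_of_nonneg_of_pos (Real.rpow_nonneg hx.1 δ) hA0).ne'
    · intro x hx
      exact (Real.rpow_pos_of_pos
        (add_pos_of_nonneg_of_pos (Real.rpow_nonneg hx.1 δ) hA0) β).ne'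
  have hInt1 : IntervalIntegrable (fun t : ℝ => t ^ α / (t ^ δ + A) ^ β) volume 0 c := by
    apply ContinuousOn.intervalIntegrable
    apply hcont.mono
    rw [Set.uIcc_of_le hc0.le]
    exact Set.Icc_subset_Icc le_rfl hc1
  have hInt2 : IntervalIntegrable (fun t : ℝ => t ^ α / (t ^ δ + A) ^ β) volume c 1 := by
    apply ContinuousOn.intervalIntegrable
    apply hcont.mono
    rw [Set.uIcc_of_le hc1]
    exact Set.Icc_subset_Icc hc0.le le_rfl
  rw [← intervalIntegral.integral_add_adjacent_intervals hInt1 hInt2]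
  have hIntg1 : IntervalIntegrable (fun t : ℝ => t ^ α / A ^ β) volume 0 c :=
    (intervalIntegral.intervalIntegrable_rpow' (by linarith)).div_const _
  have hIntg2 : IntervalIntegrable (fun t : ℝ => t⁻¹) volume c 1 := by
    apply ContinuousOn.intervalIntegrable
    apply ContinuousOn.inv₀ continuousOn_id
    intro x hx
    rw [Set.uIcc_of_le hc1] at hx
    exact (lt_of_lt_of_le hc0 hx.1).ne'
  have key1 : ∫ t in (0:ℝ)..c, t ^ α / (t ^ δ + A) ^ β ≤ 1 / (α + 1) := by
    have hmono : ∀ x ∈ Set.Icc (0:ℝ) c,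
        x ^ α / (x ^ δ + A) ^ β ≤ x ^ α / A ^ β := by
      intro x hx
      exact div_le_div_of_nonneg_left (Real.rpow_nonneg hx.1 α)
        (Real.rpow_pos_of_pos hA0 β)
        (Real.rpow_le_rpow hA0.le
          (le_add_of_nonneg_left (Real.rpow_nonneg hx.1 δ)) hβ.le)
    have h1 := intervalIntegral.integral_mono_on hc0.le hInt1 hIntg1 hmono
    refine h1.trans ?_
    rw [intervalIntegral.integral_div, integral_rpow (Or.inl (by linarith))]
    rw [Real.zero_rpow hα1.ne']
    have hAβ : A ^ (β:ℝ) ≠ 0 := (Real.rpow_pos_of_pos hA0 β).ne'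
    have hcc : (A ^ (δ⁻¹:ℝ)) ^ (α+1) = A ^ (β:ℝ) := by
      rw [← Real.rpow_mul hA0.le]
      congr 1
      field_simp
      linarith
    rw [hcc, sub_zero, div_div, mul_comm (α+1), ← div_div, div_self hAβ]
  have key2 : ∫ t in c..(1:ℝ), t ^ α / (t ^ δ + A) ^ β
      ≤ Real.log (s ^ (2 * β / (α + 1))) := by
    have hmono : ∀ x ∈ Set.Icc c (1:ℝ), x ^ α / (x ^ δ + A) ^ β ≤ x⁻¹ := by
      intro x hx
      have hx0 : 0 < x := lt_of_lt_of_le hc0 hx.1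
      have hstep : x ^ (α + 1) ≤ (x ^ δ + A) ^ β := by
        have : x ^ (α + 1) = (x ^ δ) ^ β := by
          rw [← Real.rpow_mul hx0.le, mul_comm δ β, hβδ]
        rw [this]
        exact Real.rpow_le_rpow (Real.rpow_nonneg hx0.le δ)
          (le_add_of_nonneg_right hA0.le) hβ.le
      calc x ^ α / (x ^ δ + A) ^ β ≤ x ^ α / x ^ (α + 1) :=
            div_le_div_of_nonneg_left (Real.rpow_nonneg hx0.le α)
              (Real.rpow_pos_of_pos hx0 _) hstep
        _ = x⁻¹ := by
            rw [← Real.rpow_sub hx0, show α - (α + 1) = -1 by ring,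
              Real.rpow_neg_one]
    have h1 := intervalIntegral.integral_mono_on hc1 hInt2 hIntg2 hmono
    refine h1.trans ?_
    rw [integral_inv (by
      rw [Set.uIcc_of_le hc1]
      intro hmem
      exact absurd hmem.1 (not_le.mpr hc0))]
    rw [one_div, Real.log_inv, Real.log_rpow hA0,
      Real.log_rpow hs0, Real.log_rpow hs0]
    have hδ' : δ ≠ 0 := hδ.ne'
    have : 2 * β / (α + 1) = 2 / δ := by
      rw [← hβδ]
      field_simp
    rw [this]
    have hlog : 0 ≤ Real.log s := Real.log_nonneg hs1
    field_simp
    exact le_rfl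
  linarith
end

section
/- For all real numbers α, β, δ > 0 with α − βδ < −1, there exists a constant C (depending only on α, β, δ) such that for every ξ ∈ ℝ^d, ∫₀¹ t^α / (t^δ + ⟨ξ⟩^{−2})^β dt ≤ C · ⟨ξ⟩^{2(βδ − α − 1)/δ}. -/
open MeasureTheory

/-- Lemma 4.1 (case α − βδ < −1): polynomial bound for the integral
∫₀¹ t^α / (t^δ + ⟨ξ⟩^{−2})^β dt, where ⟨ξ⟩ = √(1+|ξ|²). -/
theorem stmt_2 (d : ℕ) (α β δ : ℝ) (hα : 0 < α) (hβ : 0 < β) (hδ : 0 < δ)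
    (h : α - β * δ < -1) :
    ∃ C : ℝ, ∀ ξ : EuclideanSpace ℝ (Fin d),
      ∫ t in (0:ℝ)..1, t ^ α / (t ^ δ + (Real.sqrt (1 + ‖ξ‖ ^ 2)) ^ (-2 : ℝ)) ^ β
        ≤ C * (Real.sqrt (1 + ‖ξ‖ ^ 2)) ^ (2 * (β * δ - α - 1) / δ) := by
  have hD : 0 < β * δ - α - 1 := by linarith
  refine ⟨1 / (α + 1) + 1 / (β * δ - α - 1), fun ξ => ?_⟩
  set a := Real.sqrt (1 + ‖ξ‖ ^ 2) with ha_def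
  have ha1 : 1 ≤ a := by
    rw [ha_def, Real.one_le_sqrt]
    nlinarith [sq_nonneg ‖ξ‖]
  have ha0 : (0:ℝ) < a := lt_of_lt_of_le one_pos ha1
  set m := a ^ (-2 : ℝ) with hm_def
  have hm0 : 0 < m := Real.rpow_pos_of_pos ha0 _
  have hm1 : m ≤ 1 := Real.rpow_le_one_of_one_le_of_nonpos ha1 (by norm_num)
  set T := m ^ (1 / δ) with hT_def
  have hT0 : 0 < T := Real.rpow_pos_of_pos hm0 _
  have hT1 : T ≤ 1 := Real.rpow_le_one hm0.le hm1 (by positivity)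
  set f : ℝ → ℝ := fun t => t ^ α / (t ^ δ + m) ^ β with hf_def
  -- continuity of f on [0,1]
  have hcont : ContinuousOn f (Set.Icc 0 1) := by
    intro t ht
    apply ContinuousAt.continuousWithinAt
    have h1 : ContinuousAt (fun t : ℝ => t ^ α) t :=
      Real.continuousAt_rpow_const t α (Or.inr hα.le)
    have h2 : ContinuousAt (fun t : ℝ => t ^ δ + m) t :=
      (Real.continuousAt_rpow_const t δ (Or.inr hδ.le)).add continuousAt_const
    have hpos : 0 < t ^ δ + m := by
      have := Real.rpow_nonneg ht.1 δ; linarith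
    have h4 : ContinuousAt (fun t : ℝ => (t ^ δ + m) ^ β) t :=
      h2.rpow_const (Or.inl hpos.ne')
    exact h1.div h4 (Real.rpow_pos_of_pos hpos β).ne'
  have hi01 : ∀ u v : ℝ, 0 ≤ u → u ≤ v → v ≤ 1 → IntervalIntegrable f volume u v := by
    intro u v hu huv hv
    apply (hcont.mono ?_).intervalIntegrable
    rw [Set.uIcc_of_le huv]
    exact Set.Icc_subset_Icc hu hv
  have hiL : IntervalIntegrable f volume 0 T := hi01 0 T le_rfl hT0.le hT1
  have hiR : IntervalIntegrable f volume T 1 := hi01 T 1 hT0.le hT1 le_rfl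
  have hsplit : ∫ t in (0:ℝ)..1, f t = (∫ t in (0:ℝ)..T, f t) + ∫ t in T..(1:ℝ), f t :=
    (intervalIntegral.integral_add_adjacent_intervals hiL hiR).symm
  -- left piece bound
  have hboundL : ∫ t in (0:ℝ)..T, f t ≤ T ^ (α + 1) / (α + 1) / m ^ β := by
    have hcomp : IntervalIntegrable (fun t : ℝ => t ^ α / m ^ β) volume 0 T :=
      (intervalIntegral.intervalIntegrable_rpow' (by linarith : (-1:ℝ) < α)).div_const _
    have hmono : ∫ t in (0:ℝ)..T, f t ≤ ∫ t in (0:ℝ)..T, t ^ α / m ^ β := by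
      apply intervalIntegral.integral_mono_on hT0.le hiL hcomp
      intro t ht
      have htα : 0 ≤ t ^ α := Real.rpow_nonneg ht.1 α
      have htδ : 0 ≤ t ^ δ := Real.rpow_nonneg ht.1 δ
      have hmβ : 0 < m ^ β := Real.rpow_pos_of_pos hm0 β
      have hle : m ^ β ≤ (t ^ δ + m) ^ β :=
        Real.rpow_le_rpow hm0.le (by linarith) hβ.le
      exact div_le_div_of_nonneg_left htα hmβ hle |>.trans_eq rfl |>.trans_eq rfl
        |>.trans le_rfl
    calc ∫ t in (0:ℝ)..T, f t ≤ ∫ t in (0:ℝ)..T, t ^ α / m ^ β := hmono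
      _ = (∫ t in (0:ℝ)..T, t ^ α) / m ^ β := intervalIntegral.integral_div _ _
      _ = T ^ (α + 1) / (α + 1) / m ^ β := by
          rw [integral_rpow (Or.inl (by linarith)), Real.zero_rpow (by linarith : α + 1 ≠ 0)]
          ring_nf
  -- right piece bound
  have hboundR : ∫ t in T..(1:ℝ), f t ≤ T ^ (α - β * δ + 1) / (β * δ - α - 1) := by
    have h0T1 : (0:ℝ) ∉ Set.uIcc T 1 := by
      rw [Set.uIcc_of_le hT1]; intro hx; exact absurd hx.1 (not_le.2 hT0)
    have hcomp : IntervalIntegrable (fun t : ℝ => t ^ (α - β * δ)) volume T 1 :=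
      intervalIntegral.intervalIntegrable_rpow (Or.inr h0T1)
    have hmono : ∫ t in T..(1:ℝ), f t ≤ ∫ t in T..(1:ℝ), t ^ (α - β * δ) := by
      apply intervalIntegral.integral_mono_on hT1 hiR hcomp
      intro t ht
      have ht0 : 0 < t := lt_of_lt_of_le hT0 ht.1
      have htδ : 0 < t ^ δ := Real.rpow_pos_of_pos ht0 δ
      have hle : (t ^ δ) ^ β ≤ (t ^ δ + m) ^ β :=
        Real.rpow_le_rpow htδ.le (by linarith) hβ.le
      have hfle : f t ≤ t ^ α / (t ^ δ) ^ β := by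
        apply div_le_div_of_nonneg_left (Real.rpow_nonneg ht0.le α)
          (Real.rpow_pos_of_pos htδ β) hle
      calc f t ≤ t ^ α / (t ^ δ) ^ β := hfle
        _ = t ^ (α - β * δ) := by
            rw [← Real.rpow_mul ht0.le, Real.rpow_sub ht0]
            ring_nf
    calc ∫ t in T..(1:ℝ), f t ≤ ∫ t in T..(1:ℝ), t ^ (α - β * δ) := hmono
      _ = (1 ^ (α - β * δ + 1) - T ^ (α - β * δ + 1)) / (α - β * δ + 1) := by
          rw [integral_rpow (Or.inr ⟨by intro hc; linarith [hc ▸ h], h0T1⟩)]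
      _ ≤ T ^ (α - β * δ + 1) / (β * δ - α - 1) := by
          rw [Real.one_rpow]
          have heq : (1 - T ^ (α - β * δ + 1)) / (α - β * δ + 1)
              = (T ^ (α - β * δ + 1) - 1) / (β * δ - α - 1) := by
            rw [div_eq_div_iff (by linarith) hD.ne']
            ring
          rw [heq]
          gcongr
          linarith
  -- rewrite powers of T and m in terms of a
  have hTa : ∀ e : ℝ, T ^ e = a ^ (-2 / δ * e) := by
    intro e
    rw [hT_def, hm_def, ← Real.rpow_mul ha0.le, ← Real.rpow_mul ha0.le]
    ring_nf
  have key1 : T ^ (α + 1) / (α + 1) / m ^ β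
      = 1 / (α + 1) * a ^ (2 * (β * δ - α - 1) / δ) := by
    rw [hTa, hm_def, ← Real.rpow_mul ha0.le, div_right_comm, ← Real.rpow_sub ha0]
    rw [show -2 / δ * (α + 1) - -2 * β = 2 * (β * δ - α - 1) / δ by
      field_simp [hδ.ne']; ring]
    ring
  have key2 : T ^ (α - β * δ + 1) / (β * δ - α - 1)
      = 1 / (β * δ - α - 1) * a ^ (2 * (β * δ - α - 1) / δ) := by
    rw [hTa]
    rw [show -2 / δ * (α - β * δ + 1) = 2 * (β * δ - α - 1) / δ by
      field_simp [hδ.ne']; ring]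
    ring
  calc ∫ t in (0:ℝ)..1, f t = (∫ t in (0:ℝ)..T, f t) + ∫ t in T..(1:ℝ), f t := hsplit
    _ ≤ T ^ (α + 1) / (α + 1) / m ^ β + T ^ (α - β * δ + 1) / (β * δ - α - 1) :=
        add_le_add hboundL hboundR
    _ = (1 / (α + 1) + 1 / (β * δ - α - 1)) * a ^ (2 * (β * δ - α - 1) / δ) := by
        rw [key1, key2]; ring
end

section
/- For every integer k ≥ 2 and ρ = 1/2 − 1/k, there exists a constant C such that for all ξ ∈ ℝ, ∫₀¹ t^{kρ} |ξ| / sqrt(1 + t^k ⟨ξ⟩²) dt ≤ C · log(1 + ⟨ξ⟩). -/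
open MeasureTheory

/-- Lemma 4.3 (case l = 0): for k ≥ 2 and ρ = 1/2 − 1/k there is a constant C with
∫₀¹ t^{kρ}|ξ| / √(1 + t^k ⟨ξ⟩²) dt ≤ C·log(1 + ⟨ξ⟩), where ⟨ξ⟩ = √(1+ξ²). -/
theorem stmt_4 (k : ℕ) (hk : 2 ≤ k) (ρ : ℝ) (hρ : ρ = 1 / 2 - 1 / (k : ℝ)) :
    ∃ C : ℝ, ∀ ξ : ℝ,
      ∫ t in (0:ℝ)..1, t ^ ((k : ℝ) * ρ) * |ξ| / Real.sqrt (1 + t ^ (k : ℝ) * (1 + ξ ^ 2))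
        ≤ C * Real.log (1 + Real.sqrt (1 + ξ ^ 2)) := by
  refine ⟨1 / Real.log 2 + 1, fun ξ => ?_⟩
  have hk2 : (2:ℝ) ≤ (k:ℝ) := by exact_mod_cast hk
  have hk0 : (0:ℝ) < (k:ℝ) := by linarith
  set a := Real.sqrt (1 + ξ ^ 2) with ha_def
  have ha1 : 1 ≤ a := Real.one_le_sqrt.mpr (by nlinarith [sq_nonneg ξ])
  have ha0 : 0 < a := lt_of_lt_of_le one_pos ha1
  set c := (k : ℝ) * ρ with hc_def
  have hc : c = (k:ℝ)/2 - 1 := by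
    rw [hc_def, hρ]; field_simp
  have hc0 : 0 ≤ c := by rw [hc]; linarith
  set t₀ := a ^ (-2/(k:ℝ)) with ht0_def
  have ht0pos : 0 < t₀ := Real.rpow_pos_of_pos ha0 _
  have ht0le : t₀ ≤ 1 :=
    Real.rpow_le_one_of_one_le_of_nonpos ha1 (by
      apply div_nonpos_of_nonpos_of_nonneg <;> linarith)
  have hξa : |ξ| ≤ a := by
    rw [ha_def, ← Real.sqrt_sq_eq_abs]
    exact Real.sqrt_le_sqrt (by nlinarith)
  set f := fun t : ℝ => t ^ c * |ξ| / Real.sqrt (1 + t ^ (k:ℝ) * (1 + ξ ^ 2)) with hf_def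
  have hDpos : ∀ t : ℝ, 0 ≤ t → (0:ℝ) < 1 + t ^ (k:ℝ) * (1 + ξ ^ 2) := by
    intro t ht
    have := Real.rpow_nonneg ht (k:ℝ)
    nlinarith [sq_nonneg ξ]
  have hfcont : ContinuousOn f (Set.Icc 0 1) := by
    apply ContinuousOn.div
    · exact ((Real.continuous_rpow_const hc0).mul continuous_const).continuousOn
    · exact (Real.continuous_sqrt.comp (continuous_const.add
        ((Real.continuous_rpow_const (by positivity)).mul continuous_const))).continuousOn
    · intro t ht
      exact (Real.sqrt_pos.mpr (hDpos t ht.1)).ne'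
  have hint : ∀ x y : ℝ, 0 ≤ x → x ≤ y → y ≤ 1 → IntervalIntegrable f volume x y := by
    intro x y hx hxy hy
    apply (hfcont.mono ?_).intervalIntegrable
    rw [Set.uIcc_of_le hxy]
    exact Set.Icc_subset_Icc hx hy
  have hsplit : ∫ t in (0:ℝ)..1, f t = (∫ t in (0:ℝ)..t₀, f t) + ∫ t in t₀..(1:ℝ), f t :=
    (intervalIntegral.integral_add_adjacent_intervals
      (hint 0 t₀ le_rfl ht0pos.le ht0le) (hint t₀ 1 ht0pos.le ht0le le_rfl)).symm
  -- first piece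
  have hb1 : (∫ t in (0:ℝ)..t₀, f t) ≤ ∫ t in (0:ℝ)..t₀, t ^ c * a := by
    apply intervalIntegral.integral_mono_on ht0pos.le (hint 0 t₀ le_rfl ht0pos.le ht0le)
      (((Real.continuous_rpow_const hc0).mul continuous_const).intervalIntegrable 0 t₀)
    intro t ht
    have h1 : 1 ≤ Real.sqrt (1 + t ^ (k:ℝ) * (1 + ξ ^ 2)) := by
      rw [Real.one_le_sqrt]
      have := Real.rpow_nonneg ht.1 (k:ℝ)
      nlinarith [sq_nonneg ξ]
    calc f t ≤ t ^ c * |ξ| := div_le_self (mul_nonneg (Real.rpow_nonneg ht.1 c) (abs_nonneg ξ)) h1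
      _ ≤ t ^ c * a := mul_le_mul_of_nonneg_left hξa (Real.rpow_nonneg ht.1 c)
  have hval1 : (∫ t in (0:ℝ)..t₀, t ^ c * a) = 2/(k:ℝ) := by
    rw [intervalIntegral.integral_mul_const, integral_rpow (Or.inl (by linarith))]
    have hz : (0:ℝ) ^ (c+1) = 0 := Real.zero_rpow (by rw [hc]; intro h; nlinarith)
    have ht0v : t₀ ^ (c+1) = a⁻¹ := by
      rw [ht0_def, ← Real.rpow_mul ha0.le,
        show (-2/(k:ℝ)) * (c+1) = -1 by rw [hc]; field_simp; ring]
      exact Real.rpow_neg_one a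
    rw [hz, ht0v, hc]
    field_simp
    ring
    exact mul_inv_cancel₀ hk0.ne'
  -- second piece
  have hb2 : (∫ t in t₀..(1:ℝ), f t) ≤ ∫ t in t₀..(1:ℝ), 1/t := by
    apply intervalIntegral.integral_mono_on ht0le (hint t₀ 1 ht0pos.le ht0le le_rfl)
    · apply ContinuousOn.intervalIntegrable
      apply ContinuousOn.div continuousOn_const continuousOn_id
      intro t ht
      rw [Set.uIcc_of_le ht0le] at ht
      exact (lt_of_lt_of_le ht0pos ht.1).ne'
    intro t ht
    have htp : 0 < t := lt_of_lt_of_le ht0pos ht.1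
    have hDa : t ^ ((k:ℝ)/2) * a ≤ Real.sqrt (1 + t ^ (k:ℝ) * (1 + ξ ^ 2)) := by
      have heq : t ^ ((k:ℝ)/2) * a = Real.sqrt (t ^ (k:ℝ) * (1 + ξ ^ 2)) := by
        rw [Real.sqrt_mul (Real.rpow_nonneg htp.le _), ha_def]
        congr 1
        rw [Real.sqrt_eq_rpow, ← Real.rpow_mul htp.le, mul_one_div]
      rw [heq]
      exact Real.sqrt_le_sqrt (by nlinarith [Real.rpow_nonneg htp.le (k:ℝ), sq_nonneg ξ])
    have hden : 0 < t ^ ((k:ℝ)/2) * a := by positivity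
    calc f t ≤ (t ^ c * a) / (t ^ ((k:ℝ)/2) * a) := by
          apply div_le_div₀ (by positivity)
            (mul_le_mul_of_nonneg_left hξa (Real.rpow_nonneg htp.le c)) hden hDa
      _ = 1/t := by
          rw [mul_div_mul_right _ _ ha0.ne', ← Real.rpow_sub htp,
            show c - (k:ℝ)/2 = -1 by rw [hc]; ring, Real.rpow_neg_one, one_div]
  have hval2 : (∫ t in t₀..(1:ℝ), 1/t) = (2/(k:ℝ)) * Real.log a := by
    rw [integral_one_div (by
      rw [Set.uIcc_of_le ht0le]
      intro h
      exact absurd h.1 (not_le.mpr ht0pos))]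
    rw [one_div, Real.log_inv, ht0_def, Real.log_rpow ha0]
    ring
  -- combine
  have hla : 0 ≤ Real.log a := Real.log_nonneg ha1
  have hl2 : Real.log 2 ≤ Real.log (1+a) := Real.log_le_log (by norm_num) (by linarith)
  have hlog2 : 0 < Real.log 2 := Real.log_pos (by norm_num)
  have h3 : Real.log a ≤ Real.log (1+a) := Real.log_le_log ha0 (by linarith)
  have h2k : 2/(k:ℝ) ≤ 1 := by rw [div_le_one hk0]; exact hk2
  have h2k0 : 0 < 2/(k:ℝ) := by positivity
  have hone : 1 ≤ Real.log (1+a) / Real.log 2 := (one_le_div hlog2).mpr hl2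
  calc ∫ t in (0:ℝ)..1, f t
      = (∫ t in (0:ℝ)..t₀, f t) + ∫ t in t₀..(1:ℝ), f t := hsplit
    _ ≤ (2/(k:ℝ)) + (2/(k:ℝ)) * Real.log a := by
        have := hval1 ▸ hb1
        have := hval2 ▸ hb2
        linarith
    _ ≤ 1 + Real.log a := by nlinarith
    _ ≤ (1 / Real.log 2 + 1) * Real.log (1 + a) := by
        rw [add_mul, one_mul, one_div, inv_mul_eq_div]
        linarith
end
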